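/- Let X be a compact Hausdorff space, A a unital C(X)-algebra (structure map θ_A) which is a continuous field of C*-algebras over X, D a unital C(X)-algebra (structure map θ_D), and π : D → A a unital *-homomorphism satisfying π(θ_D(f)d) = θ_A(f)π(d) for all f ∈ C(X) and d ∈ D. Assume that π is a continuous field of faithful representations, i.e. for every x ∈ X and every d ∈ D one has ‖d_x‖ = sup{ ‖(π(d)·a)_x‖ : a ∈ A, ‖a‖ ≤ 1 }, where the fiber seminorms on the left and right are computed in D and in A respectively. Then for every d ∈ D the function x ↦ sup{ ‖(π(d)·a)_x‖ : a ∈ A, ‖a‖ ≤ 1 } is lower semicontinuous, and consequently D is a continuous field of C*-algebras over X, i.e. x ↦ ‖d_x‖ is continuous for every d ∈ D. -/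

import Mathlib

/-- The fiber ideal `I_x(A)` of a `C(X)`-algebra `A` with structure map `θ` at a point `x`:
the closed linear span of `{θ(f) * a : f ∈ C(X), f x = 0, a ∈ A}`. -/
def fiberIdeal {X : Type*} [TopologicalSpace X] {A : Type*} [NormedRing A] [StarRing A]
    [NormedAlgebra ℂ A] (θ : C(X, ℂ) →⋆ₐ[ℂ] A) (x : X) : Set A :=
  closure (Submodule.span ℂ {y : A | ∃ (f : C(X, ℂ)) (b : A), f x = 0 ∧ y = θ f * b} : Set A)

/-- The fiber seminorm `‖a_x‖ := dist(a, I_x(A))`. -/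
noncomputable def fiberNorm {X : Type*} [TopologicalSpace X] {A : Type*} [NormedRing A]
    [StarRing A] [NormedAlgebra ℂ A] (θ : C(X, ℂ) →⋆ₐ[ℂ] A) (x : X) (a : A) : ℝ :=
  Metric.infDist a (fiberIdeal θ x)

/-- Let `A` be a unital `C(X)`-algebra (structure map `θA`) which is a continuous field over the
compact Hausdorff space `X`, `D` a unital `C(X)`-algebra (structure map `θD`), and
`π : D → A` a unital `C(X)`-linear `*`-homomorphism which is a continuous field of faithful
representations, i.e. `‖d_x‖ = sup { ‖(π(d) a)_x‖ : ‖a‖ ≤ 1 }` for all `x, d`. Then for each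
`d ∈ D` the function `x ↦ sup { ‖(π(d) a)_x‖ : ‖a‖ ≤ 1 }` is lower semicontinuous and
`x ↦ ‖d_x‖` is continuous, i.e. `D` is a continuous field of C*-algebras over `X`. -/

lemma zero_mem_fiberIdeal {X : Type*} [TopologicalSpace X] {A : Type*} [NormedRing A]
    [StarRing A] [NormedAlgebra ℂ A] (θ : C(X, ℂ) →⋆ₐ[ℂ] A) (x : X) :
    (0 : A) ∈ fiberIdeal θ x :=
  subset_closure (Submodule.zero_mem _)

lemma fiberNorm_nonneg {X : Type*} [TopologicalSpace X] {A : Type*} [NormedRing A]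
    [StarRing A] [NormedAlgebra ℂ A] (θ : C(X, ℂ) →⋆ₐ[ℂ] A) (x : X) (a : A) :
    0 ≤ fiberNorm θ x a := Metric.infDist_nonneg

lemma fiberNorm_le_norm {X : Type*} [TopologicalSpace X] {A : Type*} [NormedRing A]
    [StarRing A] [NormedAlgebra ℂ A] (θ : C(X, ℂ) →⋆ₐ[ℂ] A) (x : X) (a : A) :
    fiberNorm θ x a ≤ ‖a‖ := by
  simpa [fiberNorm] using Metric.infDist_le_dist_of_mem (zero_mem_fiberIdeal θ x)

lemma upperSemicontinuous_fiberNorm {X : Type*} [TopologicalSpace X] {A : Type*} [NormedRing A]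
    [StarRing A] [NormedAlgebra ℂ A] (θ : C(X, ℂ) →⋆ₐ[ℂ] A) (d : A) :
    UpperSemicontinuous fun x : X => fiberNorm θ x d := by
  intro x c hc
  -- hc : fiberNorm θ x d < c
  have hne : (Submodule.span ℂ {y : A | ∃ (f : C(X, ℂ)) (b : A), f x = 0 ∧ y = θ f * b} :
      Set A).Nonempty := ⟨0, Submodule.zero_mem _⟩
  have h1 : Metric.infDist d (Submodule.span ℂ
      {y : A | ∃ (f : C(X, ℂ)) (b : A), f x = 0 ∧ y = θ f * b} : Set A) < c := by
    simpa only [fiberNorm, fiberIdeal, Metric.infDist_closure] using hc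
  obtain ⟨i, hi, hdi⟩ := (Metric.infDist_lt_iff hne).1 h1
  obtain ⟨n, co, g, hg⟩ := Submodule.mem_span_set'.1 hi
  choose f b hf hgb using fun k => (g k).2
  -- i = ∑ co k • (θ (f k) * b k)
  have hi' : ∑ k, co k • (θ (f k) * b k) = i := by
    rw [← hg]; congr 1; ext k; rw [hgb k]
  set r : X → ℝ := fun y => ∑ k, ‖co k‖ * ‖f k y‖ * ‖b k‖ with hr
  have hrx : r x = 0 := by
    simp [hr, hf]
  have hrc : Continuous r := by
    apply continuous_finset_sum
    intro k _
    exact (continuous_const.mul ((f k).continuous.norm.comp continuous_id)).mul continuous_const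
  have key : ∀ y : X, fiberNorm θ y d ≤ dist d i + r y := by
    intro y
    set j : A := ∑ k, co k • (θ (f k - (f k y) • 1) * b k) with hj
    have hjmem : j ∈ fiberIdeal θ y := by
      apply subset_closure
      apply Submodule.sum_mem
      intro k _
      apply Submodule.smul_mem
      apply Submodule.subset_span
      exact ⟨f k - (f k y) • 1, b k, by simp, rfl⟩
    have hij : ‖i - j‖ ≤ r y := by
      have : i - j = ∑ k, (co k * f k y) • b k := by
        rw [← hi', hj, ← Finset.sum_sub_distrib]
        congr 1; ext k
        rw [← smul_sub, ← sub_mul]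
        simp only [map_sub, map_smul, map_one, sub_sub_cancel]
        rw [mul_smul, smul_mul_assoc, one_mul]
      rw [this]
      refine (norm_sum_le _ _).trans ?_
      apply Finset.sum_le_sum
      intro k _
      rw [norm_smul, norm_mul]
    calc fiberNorm θ y d ≤ dist d j := Metric.infDist_le_dist_of_mem hjmem
      _ ≤ dist d i + dist i j := dist_triangle _ _ _
      _ ≤ dist d i + r y := by simp only [dist_eq_norm]; linarith
  have hcont : ContinuousAt (fun y => dist d i + r y) x := (continuous_const.add hrc).continuousAt
  have hlt : dist d i + r x < c := by rw [hrx]; linarith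
  filter_upwards [hcont.eventually_lt_const hlt] with y hy
  exact lt_of_le_of_lt (key y) hy

theorem continuousField_of_faithful_field_of_reps
    {X : Type*} [TopologicalSpace X] [CompactSpace X] [T2Space X]
    {A : Type*} [NormedRing A] [StarRing A] [CStarRing A] [CompleteSpace A]
    [NormedAlgebra ℂ A] [StarModule ℂ A]
    {D : Type*} [NormedRing D] [StarRing D] [CStarRing D] [CompleteSpace D]
    [NormedAlgebra ℂ D] [StarModule ℂ D]
    (θA : C(X, ℂ) →⋆ₐ[ℂ] A) (hθA : ∀ (f : C(X, ℂ)) (a : A), θA f * a = a * θA f)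
    (θD : C(X, ℂ) →⋆ₐ[ℂ] D) (hθD : ∀ (f : C(X, ℂ)) (d : D), θD f * d = d * θD f)
    (hA : ∀ a : A, Continuous fun x : X => fiberNorm θA x a)
    (π : D →⋆ₐ[ℂ] A) (hπ : ∀ (f : C(X, ℂ)) (d : D), π (θD f * d) = θA f * π d)
    (hfaith : ∀ (x : X) (d : D),
      fiberNorm θD x d = ⨆ a : {a : A // ‖a‖ ≤ 1}, fiberNorm θA x (π d * (a : A))) :
    (∀ d : D, LowerSemicontinuous
        fun x : X => ⨆ a : {a : A // ‖a‖ ≤ 1}, fiberNorm θA x (π d * (a : A))) ∧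
      ∀ d : D, Continuous fun x : X => fiberNorm θD x d := by
  have lsc : ∀ d : D, LowerSemicontinuous
      fun x : X => ⨆ a : {a : A // ‖a‖ ≤ 1}, fiberNorm θA x (π d * (a : A)) := by
    intro d
    apply lowerSemicontinuous_ciSup
    · intro x
      refine ⟨‖π d‖, ?_⟩
      rintro - ⟨a, rfl⟩
      refine (fiberNorm_le_norm θA x _).trans ?_
      calc ‖π d * (a : A)‖ ≤ ‖π d‖ * ‖(a : A)‖ := norm_mul_le _ _
        _ ≤ ‖π d‖ * 1 := by
            exact mul_le_mul_of_nonneg_left a.2 (norm_nonneg _)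
        _ = ‖π d‖ := mul_one _
    · exact fun a => (hA _).lowerSemicontinuous
  refine ⟨lsc, fun d => ?_⟩
  rw [continuous_iff_lower_upperSemicontinuous]
  constructor
  · have : (fun x : X => fiberNorm θD x d)
        = fun x : X => ⨆ a : {a : A // ‖a‖ ≤ 1}, fiberNorm θA x (π d * (a : A)) :=
      funext fun x => hfaith x d
    rw [this]
    exact lsc d
  · exact upperSemicontinuous_fiberNorm θD d
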